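/- For every n ≥ 1, ℙ( Σ_{i=k}^n (F_i − H_i) ≥ 0 for every k = 1, 2, …, n ) = Σ_{A ⊆ {1,…,n}} F(|A|) · ∏_{i∈A} p_i · ∏_{i∉A} (1−p_i), where p_i = 2α_i(1−α_i); that is, this probability equals the expectation E[F(M_1+⋯+M_n)] for independent Bernoulli random variables M_i with success probabilities p_i. -/

import Mathlib

open MeasureTheory ProbabilityTheory


/-- Number of nonnegative walk continuations: closed form. -/
def Gfun (m h : ℕ) : ℕ := ∑ t ∈ Finset.Icc ((m + 1 - h) / 2) ((m + h + 1) / 2), m.choose t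

lemma Gfun_zero (h : ℕ) : Gfun 0 h = 1 := by
  unfold Gfun
  have h1 : (0 + 1 - h) / 2 = 0 := by omega
  rw [h1]
  rw [Finset.sum_eq_single_of_mem 0 (by simp)]
  · simp
  · intro b _ hb
    exact Nat.choose_eq_zero_of_lt (by omega)

lemma sum_choose_pascal (m : ℕ) : ∀ b a : ℕ, 1 ≤ b → a ≤ b →
    (∑ t ∈ Finset.Icc a b, (m+1).choose t)
      = (∑ t ∈ Finset.Icc a b, m.choose t) + ∑ t ∈ Finset.Icc (a-1) (b-1), m.choose t := by
  intro b
  induction b with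
  | zero => intro a h1 _; omega
  | succ b ih =>
    intro a _ hab
    rcases Nat.lt_or_ge b 1 with hb | hb
    · -- b = 0, so b+1 = 1, a ∈ {0, 1}
      interval_cases b
      interval_cases a
      · simp [Finset.sum_Icc_succ_top, Nat.choose]; omega
      · simp [Nat.choose]; omega
    · rcases Nat.eq_or_lt_of_le hab with h | h
      · -- a = b+1
        subst h
        simp only [Nat.add_sub_cancel, Finset.Icc_self, Finset.sum_singleton]
        have := Nat.choose_succ_succ m b
        simp only [Nat.succ_eq_add_one] at this
        omega
      · have hab' : a ≤ b := by omega
        rw [Finset.sum_Icc_succ_top hab ((m+1).choose), Finset.sum_Icc_succ_top hab (m.choose), ih a hb hab']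
        have h2 : b + 1 - 1 = b := by omega
        rw [h2]
        have h3 : b = (b-1) + 1 := by omega
        have h4 : ∑ t ∈ Finset.Icc (a-1) b, m.choose t
            = (∑ t ∈ Finset.Icc (a-1) (b-1), m.choose t) + m.choose b := by
          conv_lhs => rw [h3]
          rw [Finset.sum_Icc_succ_top (by omega) (m.choose)]
          rw [← h3]
        rw [h4]
        have h5 : (m+1).choose (b+1) = m.choose b + m.choose (b+1) := Nat.choose_succ_succ m b
        omega

lemma Gfun_succ_zero (m : ℕ) : Gfun (m+1) 0 = Gfun m 1 := by
  unfold Gfun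
  rcases Nat.even_or_odd m with ⟨r, hr⟩ | ⟨r, hr⟩
  · subst hr
    have e1 : (r + r + 1 + 1 - 0) / 2 = r + 1 := by omega
    have e2 : (r + r + 1 + 0 + 1) / 2 = r + 1 := by omega
    have e3 : (r + r + 1 - 1) / 2 = r := by omega
    have e4 : (r + r + 1 + 1) / 2 = r + 1 := by omega
    rw [e1, e2, e3, Finset.Icc_self, Finset.sum_singleton]
    rw [Finset.sum_Icc_succ_top (by omega), Finset.Icc_self, Finset.sum_singleton]
    have : r + r + 1 = (r + r) + 1 := rfl
    rw [this, Nat.choose_succ_succ (r+r) r]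
  · subst hr
    have e1 : (2 * r + 1 + 1 + 1 - 0) / 2 = r + 1 := by omega
    have e2 : (2 * r + 1 + 1 + 0 + 1) / 2 = r + 1 := by omega
    have e3 : (2 * r + 1 + 1 - 1) / 2 = r := by omega
    have e4 : (2 * r + 1 + 1 + 1) / 2 = r + 1 := by omega
    rw [e1, e2, e3, Finset.Icc_self, Finset.sum_singleton]
    rw [Finset.sum_Icc_succ_top (by omega), Finset.Icc_self, Finset.sum_singleton]
    have : 2 * r + 1 + 1 = (2 * r + 1) + 1 := rfl
    rw [this, Nat.choose_succ_succ (2*r+1) r]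

lemma Gfun_succ_succ (m h : ℕ) : Gfun (m+1) (h+1) = Gfun m (h+2) + Gfun m h := by
  unfold Gfun
  set a := (m + 1 - h) / 2 with ha
  set b := (m + h + 3) / 2 with hb
  have e1 : (m + 1 + 1 - (h+1)) / 2 = a := by omega
  have e2 : (m + 1 + (h+1) + 1) / 2 = b := by omega
  have e3 : (m + 1 - (h+2)) / 2 = a - 1 := by omega
  have e4 : (m + (h+2) + 1) / 2 = b := by omega
  have e5 : (m + h + 1) / 2 = b - 1 := by omega
  have hb1 : 1 ≤ b := by omega
  have hab : a ≤ b := by omega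
  rw [e1, e2, e3, e4, e5]
  rw [sum_choose_pascal m b a hb1 hab]
  -- now: ∑ Icc a b + ∑ Icc (a-1) (b-1) = ∑ Icc (a-1) b + ∑ Icc a (b-1)
  have h3 : b = (b-1) + 1 := by omega
  have split1 : ∑ t ∈ Finset.Icc (a-1) b, m.choose t
      = (∑ t ∈ Finset.Icc (a-1) (b-1), m.choose t) + m.choose b := by
    conv_lhs => rw [h3]
    rw [Finset.sum_Icc_succ_top (by omega) (m.choose), ← h3]
  have split2 : ∑ t ∈ Finset.Icc a b, m.choose t
      = (∑ t ∈ Finset.Icc a (b-1), m.choose t) + m.choose b := by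
    conv_lhs => rw [h3]
    rw [Finset.sum_Icc_succ_top (by omega) (m.choose), ← h3]
  omega

lemma Gfun_closed (m : ℕ) : Gfun m 0 = m.choose (m / 2) := by
  unfold Gfun
  have e1 : (m + 1 - 0) / 2 = (m+1)/2 := by omega
  rw [e1, Nat.add_zero, Finset.Icc_self, Finset.sum_singleton]
  have h1 : m - (m+1)/2 = m / 2 := by omega
  have h2 : (m+1)/2 ≤ m ∨ m = 0 := by omega
  rcases h2 with h2 | rfl
  · rw [← h1, Nat.choose_symm h2]
  · rfl

def walkCond (n h : ℕ) (A U : Finset ℕ) : Prop :=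
  ∀ k ∈ Finset.Icc 1 n, (A ∩ Finset.Icc k n).card ≤ 2 * (U ∩ Finset.Icc k n).card + h

instance (n h : ℕ) (A U : Finset ℕ) : Decidable (walkCond n h A U) := by
  unfold walkCond; infer_instance

lemma card_insert_inter (a k n : ℕ) (B : Finset ℕ) (haB : a ∉ B) (han : a ≤ n) :
    ((insert a B) ∩ Finset.Icc k n).card
      = (B ∩ Finset.Icc k n).card + (if k ≤ a then 1 else 0) := by
  by_cases hk : k ≤ a
  · rw [if_pos hk, Finset.insert_inter_of_mem (by simp only [Finset.mem_Icc]; omega),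
      Finset.card_insert_of_notMem (by simp [haB])]
  · rw [if_neg hk, Finset.insert_inter_of_notMem (by simp only [Finset.mem_Icc]; omega)]
    omega

lemma inter_Icc_empty (k n : ℕ) (B : Finset ℕ) (hlt : ∀ x ∈ B, x < k) :
    B ∩ Finset.Icc k n = ∅ := by
  ext x
  simp only [Finset.mem_inter, Finset.mem_Icc, Finset.notMem_empty, iff_false]
  rintro ⟨hx, hk, -⟩
  have := hlt x hx; omega

lemma walkCond_insert_mem {n a h : ℕ} {A U : Finset ℕ} (haA : a ∉ A) (hUA : U ⊆ A)
    (han : a ≤ n) (hlt : ∀ x ∈ A, x < a) :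
    walkCond n h (insert a A) (insert a U) ↔ walkCond n (h+1) A U := by
  unfold walkCond
  have haU : a ∉ U := fun hh => haA (hUA hh)
  apply forall₂_congr
  intro k hk
  rw [card_insert_inter a k n A haA han, card_insert_inter a k n U haU han]
  by_cases hka : k ≤ a
  · simp only [if_pos hka]; omega
  · have hA0 : (A ∩ Finset.Icc k n) = ∅ :=
      inter_Icc_empty k n A (fun x hx => by have := hlt x hx; omega)
    have hU0 : (U ∩ Finset.Icc k n) = ∅ :=
      inter_Icc_empty k n U (fun x hx => by have := hlt x (hUA hx); omega)
    rw [hA0, hU0]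
    simp [hka]

lemma walkCond_insert_not_mem {n a h : ℕ} {A U : Finset ℕ} (haA : a ∉ A) (hUA : U ⊆ A)
    (han : a ≤ n) (hlt : ∀ x ∈ A, x < a) :
    walkCond n (h+1) (insert a A) U ↔ walkCond n h A U := by
  unfold walkCond
  apply forall₂_congr
  intro k hk
  rw [card_insert_inter a k n A haA han]
  by_cases hka : k ≤ a
  · simp only [if_pos hka]; omega
  · have hA0 : (A ∩ Finset.Icc k n) = ∅ :=
      inter_Icc_empty k n A (fun x hx => by have := hlt x hx; omega)
    rw [hA0]
    simp [hka]

lemma walkCond_zero_not_mem {n a : ℕ} {A U : Finset ℕ} (haA : a ∉ A) (hUA : U ⊆ A)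
    (ha1 : 1 ≤ a) (han : a ≤ n) (hlt : ∀ x ∈ A, x < a) :
    ¬ walkCond n 0 (insert a A) U := by
  intro hc
  have := hc a (by simp only [Finset.mem_Icc]; omega)
  rw [card_insert_inter a a n A haA han] at this
  have hA0 : (A ∩ Finset.Icc a n) = ∅ := inter_Icc_empty a n A hlt
  have hU0 : (U ∩ Finset.Icc a n) = ∅ :=
    inter_Icc_empty a n U (fun x hx => hlt x (hUA hx))
  rw [hA0, hU0] at this
  simp at this

lemma count_walkCond (n : ℕ) : ∀ (m : ℕ) (A : Finset ℕ), A.card = m → A ⊆ Finset.Icc 1 n →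
    ∀ h, (A.powerset.filter (fun U => walkCond n h A U)).card = Gfun m h := by
  intro m
  induction m with
  | zero =>
    intro A hA _ h
    rw [Finset.card_eq_zero] at hA; subst hA
    rw [Gfun_zero, Finset.powerset_empty, Finset.filter_singleton, if_pos]
    · simp
    · intro k hk; simp [walkCond]
  | succ m ih =>
    intro A hcard hsub h
    have hne : A.Nonempty := by rw [← Finset.card_pos]; omega
    set a := A.max' hne with hadef
    have haA : a ∈ A := A.max'_mem hne
    set A' := A.erase a with hA'def
    have haA' : a ∉ A' := Finset.notMem_erase a A
    have hins : insert a A' = A := Finset.insert_erase haA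
    have hcard' : A'.card = m := by
      rw [hA'def, Finset.card_erase_of_mem haA]; omega
    have hsub' : A' ⊆ Finset.Icc 1 n := fun x hx => hsub (Finset.mem_of_mem_erase hx)
    have hlt : ∀ x ∈ A', x < a := by
      intro x hx
      have hle := A.le_max' x (Finset.mem_of_mem_erase hx)
      have hne' := Finset.ne_of_mem_erase hx
      omega
    have ha1 : 1 ≤ a := by
      have := hsub haA; simp only [Finset.mem_Icc] at this; omega
    have han : a ≤ n := by
      have := hsub haA; simp only [Finset.mem_Icc] at this; omega
    have hsplit := Finset.card_filter_add_card_filter_not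
      (s := A.powerset.filter (fun U => walkCond n h A U)) (p := fun U => a ∈ U)
    rw [Finset.filter_filter, Finset.filter_filter] at hsplit
    -- first part: a ∈ U
    have hpart1 : (A.powerset.filter (fun U => walkCond n h A U ∧ a ∈ U)).card
        = Gfun m (h+1) := by
      rw [← ih A' hcard' hsub' (h+1)]
      refine Finset.card_bij' (fun U _ => U.erase a) (fun U' _ => insert a U') ?_ ?_ ?_ ?_
      · intro U hU
        simp only [Finset.mem_filter, Finset.mem_powerset] at hU ⊢
        obtain ⟨hUA, hcond, haU⟩ := hU
        have hUA' : U.erase a ⊆ A' := Finset.erase_subset_erase a hUA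
        refine ⟨hUA', ?_⟩
        rw [← walkCond_insert_mem haA' hUA' han hlt, Finset.insert_erase haU, hins]
        exact hcond
      · intro U' hU'
        simp only [Finset.mem_filter, Finset.mem_powerset] at hU' ⊢
        obtain ⟨hU'A', hcond⟩ := hU'
        have haU' : a ∉ U' := fun hh => haA' (hU'A' hh)
        refine ⟨?_, ?_, Finset.mem_insert_self a U'⟩
        · rw [← hins]; exact Finset.insert_subset_insert a hU'A'
        · rw [← hins, walkCond_insert_mem haA' hU'A' han hlt]
          exact hcond
      · intro U hU
        simp only [Finset.mem_filter] at hU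
        exact Finset.insert_erase hU.2.2
      · intro U' hU'
        simp only [Finset.mem_filter, Finset.mem_powerset] at hU'
        have haU' : a ∉ U' := fun hh => haA' (hU'.1 hh)
        exact Finset.erase_insert haU'
    -- second part: a ∉ U
    rcases h with _ | h'
    · -- h = 0 : second part empty
      have hpart2 : (A.powerset.filter (fun U => walkCond n 0 A U ∧ ¬ a ∈ U)).card = 0 := by
        rw [Finset.card_eq_zero, Finset.filter_eq_empty_iff]
        intro U hU
        simp only [Finset.mem_powerset] at hU
        rintro ⟨hcond, haU⟩
        have hUA' : U ⊆ A' := by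
          rw [hA'def, Finset.subset_erase]; exact ⟨hU, haU⟩
        rw [← hins] at hcond
        exact walkCond_zero_not_mem haA' hUA' ha1 han hlt hcond
      rw [Gfun_succ_zero]
      simp only [show (0:ℕ)+1 = 1 from rfl] at hpart1
      omega
    · -- h = h' + 1
      have hpart2 : (A.powerset.filter (fun U => walkCond n (h'+1) A U ∧ ¬ a ∈ U)).card
          = Gfun m h' := by
        rw [← ih A' hcard' hsub' h']
        congr 1
        ext U
        simp only [Finset.mem_filter, Finset.mem_powerset]
        constructor
        · rintro ⟨hUA, hcond, haU⟩
          have hUA' : U ⊆ A' := by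
            rw [hA'def, Finset.subset_erase]; exact ⟨hUA, haU⟩
          rw [← hins, walkCond_insert_not_mem haA' hUA' han hlt] at hcond
          exact ⟨hUA', hcond⟩
        · rintro ⟨hUA', hcond⟩
          have haU : a ∉ U := fun hh => haA' (hUA' hh)
          refine ⟨hUA'.trans (Finset.erase_subset a A), ?_, haU⟩
          rw [← hins, walkCond_insert_not_mem haA' hUA' han hlt]
          exact hcond
      rw [Gfun_succ_succ]
      simp only [show h'+1+1 = h'+2 from rfl] at hpart1
      omega
lemma good_iff (n : ℕ) (A U B : Finset ℕ) (hU : U ⊆ A) (hAB : Disjoint A B) :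
    (∀ k ∈ Finset.Icc 1 n,
        (((A \ U) ∪ B) ∩ Finset.Icc k n).card ≤ ((U ∪ B) ∩ Finset.Icc k n).card)
      ↔ walkCond n 0 A U := by
  unfold walkCond
  apply forall₂_congr
  intro k hk
  have hUB : Disjoint U B := hAB.mono_left hU
  have hAUB : Disjoint (A \ U) B := hAB.mono_left (Finset.sdiff_subset)
  have hUAU : Disjoint U (A \ U) := Finset.disjoint_sdiff
  have e1 : ((U ∪ B) ∩ Finset.Icc k n).card
      = (U ∩ Finset.Icc k n).card + (B ∩ Finset.Icc k n).card := by
    rw [Finset.union_inter_distrib_right,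
      Finset.card_union_of_disjoint
        (hUB.mono (Finset.inter_subset_left) (Finset.inter_subset_left))]
  have e2 : (((A \ U) ∪ B) ∩ Finset.Icc k n).card
      = ((A \ U) ∩ Finset.Icc k n).card + (B ∩ Finset.Icc k n).card := by
    rw [Finset.union_inter_distrib_right,
      Finset.card_union_of_disjoint
        (hAUB.mono (Finset.inter_subset_left) (Finset.inter_subset_left))]
  have e3 : (A ∩ Finset.Icc k n).card
      = (U ∩ Finset.Icc k n).card + ((A \ U) ∩ Finset.Icc k n).card := by
    conv_lhs => rw [← Finset.union_sdiff_of_subset hU]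
    rw [Finset.union_inter_distrib_right,
      Finset.card_union_of_disjoint
        (hUAU.mono (Finset.inter_subset_left) (Finset.inter_subset_left))]
  omega
section helpers

lemma regroup_sum (I : Finset ℕ) (f : Finset ℕ → Finset ℕ → ℝ) :
    ∑ S ∈ I.powerset, ∑ T ∈ I.powerset, f S T
      = ∑ A ∈ I.powerset, ∑ U ∈ A.powerset, ∑ B ∈ (I \ A).powerset,
          f (U ∪ B) ((A \ U) ∪ B) := by
  classical
  rw [← Finset.sum_product' (f := fun S T => f S T)]
  have hrhs : ∀ A ∈ I.powerset,
      (∑ U ∈ A.powerset, ∑ B ∈ (I \ A).powerset, f (U ∪ B) ((A \ U) ∪ B))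
        = ∑ q ∈ A.powerset ×ˢ (I \ A).powerset, f (q.1 ∪ q.2) ((A \ q.1) ∪ q.2) :=
    fun A _ => (Finset.sum_product' A.powerset ((I \ A).powerset)
      (fun U B => f (U ∪ B) ((A \ U) ∪ B))).symm
  rw [Finset.sum_congr rfl hrhs,
    Finset.sum_sigma' I.powerset (fun A => A.powerset ×ˢ (I \ A).powerset)
      (fun A q => f (q.1 ∪ q.2) ((A \ q.1) ∪ q.2))]
  refine Finset.sum_bij'
    (fun p _ => (⟨(p.1 \ p.2) ∪ (p.2 \ p.1), (p.1 \ p.2, p.1 ∩ p.2)⟩ :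
        Σ _ : Finset ℕ, Finset ℕ × Finset ℕ))
    (fun x _ => (x.2.1 ∪ x.2.2, (x.1 \ x.2.1) ∪ x.2.2)) ?_ ?_ ?_ ?_ ?_
  · rintro ⟨S, T⟩ hp
    simp only [Finset.mem_product, Finset.mem_powerset] at hp
    obtain ⟨hS, hT⟩ := hp
    simp only [Finset.mem_sigma, Finset.mem_product, Finset.mem_powerset]
    refine ⟨?_, ?_, ?_⟩
    · intro x hx
      simp only [Finset.mem_union, Finset.mem_sdiff] at hx
      rcases hx with ⟨h, -⟩ | ⟨h, -⟩
      exacts [hS h, hT h]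
    · exact Finset.subset_union_left
    · intro x hx
      simp only [Finset.mem_inter] at hx
      simp only [Finset.mem_sdiff, Finset.mem_union, Finset.mem_sdiff]
      exact ⟨hS hx.1, by tauto⟩
  · rintro ⟨A, U, B⟩ hx
    simp only [Finset.mem_sigma, Finset.mem_product, Finset.mem_powerset] at hx
    obtain ⟨hA, hU, hB⟩ := hx
    simp only [Finset.mem_product, Finset.mem_powerset]
    constructor
    · intro x hx
      simp only [Finset.mem_union] at hx
      rcases hx with h | h
      · exact hA (hU h)
      · exact (Finset.mem_sdiff.mp (hB h)).1
    · intro x hx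
      simp only [Finset.mem_union, Finset.mem_sdiff] at hx
      rcases hx with ⟨h, -⟩ | h
      · exact hA h
      · exact (Finset.mem_sdiff.mp (hB h)).1
  · rintro ⟨S, T⟩ hp
    have h1 : (S \ T) ∪ (S ∩ T) = S := by ext x; simp only [Finset.mem_union,
      Finset.mem_sdiff, Finset.mem_inter]; tauto
    have h2 : (((S \ T) ∪ (T \ S)) \ (S \ T)) ∪ (S ∩ T) = T := by
      ext x; simp only [Finset.mem_union, Finset.mem_sdiff, Finset.mem_inter]; tauto
    simp only [h1, h2]
  · rintro ⟨A, U, B⟩ hx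
    simp only [Finset.mem_sigma, Finset.mem_product, Finset.mem_powerset] at hx
    obtain ⟨hA, hU, hB⟩ := hx
    have hUmem : ∀ x, x ∈ U → x ∈ A := fun x hx => hU hx
    have hBmem : ∀ x, x ∈ B → x ∉ A := fun x hx => (Finset.mem_sdiff.mp (hB hx)).2
    have e1 : (U ∪ B) \ ((A \ U) ∪ B) = U := by
      ext x
      simp only [Finset.mem_sdiff, Finset.mem_union]
      have := hUmem x; have := hBmem x; tauto
    have e2 : (U ∪ B) ∩ ((A \ U) ∪ B) = B := by
      ext x
      simp only [Finset.mem_inter, Finset.mem_sdiff, Finset.mem_union]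
      have := hUmem x; have := hBmem x; tauto
    have e3 : U ∪ (((A \ U) ∪ B) \ (U ∪ B)) = A := by
      ext x
      simp only [Finset.mem_union, Finset.mem_sdiff]
      have := hUmem x; have := hBmem x; tauto
    simp only [e1, e2, e3]
  · rintro ⟨S, T⟩ hp
    have h1 : (S \ T) ∪ (S ∩ T) = S := by ext x; simp only [Finset.mem_union,
      Finset.mem_sdiff, Finset.mem_inter]; tauto
    have h2 : (((S \ T) ∪ (T \ S)) \ (S \ T)) ∪ (S ∩ T) = T := by
      ext x; simp only [Finset.mem_union, Finset.mem_sdiff, Finset.mem_inter]; tauto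
    simp only [h1, h2]

end helpers

/-- For `n ≥ 1`, the probability that the random walk `Σ_{i=k}^n (F_i − H_i)`
stays nonnegative for all `k = 1,…,n` equals
`Σ_{A ⊆ {1,…,n}} F(|A|) ∏_{i∈A} p_i ∏_{i∉A} (1−p_i)` with `p_i = 2α_i(1−α_i)`
and `F(m) = C(m, ⌊m/2⌋) 2^{−m}`; i.e. it equals `E[F(M_1 + ⋯ + M_n)]` for
independent Bernoulli `M_i` with success probabilities `p_i`. -/
theorem walk_probability_eq_expectation
    {Ω : Type*} [MeasurableSpace Ω] (P : Measure Ω) [IsProbabilityMeasure P]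
    (α : ℕ → ℝ) (hα : ∀ k, α k ∈ Set.Icc (0:ℝ) 1)
    (F H : ℕ → Ω → ℕ)
    (hFmeas : ∀ i, Measurable (F i)) (hHmeas : ∀ i, Measurable (H i))
    (hFval : ∀ i ω, F i ω = 0 ∨ F i ω = 1)
    (hHval : ∀ i ω, H i ω = 0 ∨ H i ω = 1)
    (hindep : iIndepFun (Sum.elim F H) P)
    (hF1 : ∀ i, 1 ≤ i → P {ω | F i ω = 1} = ENNReal.ofReal (α i))
    (hH1 : ∀ i, 1 ≤ i → P {ω | H i ω = 1} = ENNReal.ofReal (α i))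
    (n : ℕ) (hn : 1 ≤ n) :
    (P {ω | ∀ k ∈ Finset.Icc 1 n,
        (∑ i ∈ Finset.Icc k n, H i ω) ≤ ∑ i ∈ Finset.Icc k n, F i ω}).toReal
      = ∑ A ∈ (Finset.Icc 1 n).powerset,
          ((A.card.choose (A.card / 2) : ℝ) / 2 ^ A.card) *
            ((∏ i ∈ A, 2 * α i * (1 - α i)) *
              ∏ i ∈ Finset.Icc 1 n \ A, (1 - 2 * α i * (1 - α i))) := by
  classical
  have hα0 : ∀ i, 0 ≤ α i := fun i => (hα i).1
  have hα1 : ∀ i, α i ≤ 1 := fun i => (hα i).2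
  set I : Finset ℕ := Finset.Icc 1 n with hI
  set ind : Finset ℕ → ℕ → ℕ := fun S i => if i ∈ S then 1 else 0 with hind
  set Atom : Finset ℕ → Finset ℕ → Set Ω :=
    fun S T => ⋂ i ∈ I, (F i ⁻¹' {ind S i} ∩ H i ⁻¹' {ind T i}) with hAtom
  set wg : Finset ℕ → ℕ → ℝ := fun S i => if i ∈ S then α i else 1 - α i with hwg
  have hwg0 : ∀ S i, 0 ≤ wg S i := by
    intro S i
    rw [hwg]; dsimp only; split
    · exact hα0 i
    · linarith [hα1 i]
  have hAtomMem : ∀ S T ω, ω ∈ Atom S T ↔ ∀ i ∈ I, F i ω = ind S i ∧ H i ω = ind T i := by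
    intro S T ω
    rw [hAtom]
    simp only [Set.mem_iInter, Set.mem_inter_iff, Set.mem_preimage, Set.mem_singleton_iff]
  have hAtomMeas : ∀ S T, MeasurableSet (Atom S T) := by
    intro S T
    rw [hAtom]
    refine MeasurableSet.biInter (I.countable_toSet) (fun i _ => ?_)
    exact (hFmeas i (measurableSet_singleton _)).inter (hHmeas i (measurableSet_singleton _))
  have hFprob : ∀ (hGmeas : ∀ i, Measurable (F i)), True := fun _ => trivial
  clear hFprob
  have hprob : ∀ (G : ℕ → Ω → ℕ), (∀ i, Measurable (G i)) → (∀ i ω, G i ω = 0 ∨ G i ω = 1) →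
      (∀ i, 1 ≤ i → P {ω | G i ω = 1} = ENNReal.ofReal (α i)) →
      ∀ (S : Finset ℕ), ∀ i ∈ I, P (G i ⁻¹' {ind S i}) = ENNReal.ofReal (wg S i) := by
    intro G hGmeas hGval hG1 S i hi
    rw [hI] at hi
    have hi1 : 1 ≤ i := (Finset.mem_Icc.mp hi).1
    by_cases hiS : i ∈ S
    · rw [hwg, hind]; dsimp only; rw [if_pos hiS, if_pos hiS]
      exact hG1 i hi1
    · rw [hwg, hind]; dsimp only; rw [if_neg hiS, if_neg hiS]
      have hcompl : G i ⁻¹' {0} = {ω | G i ω = 1}ᶜ := by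
        ext ω
        simp only [Set.mem_preimage, Set.mem_singleton_iff, Set.mem_compl_iff, Set.mem_setOf_eq]
        rcases hGval i ω with h | h <;> simp [h]
      have hms : MeasurableSet {ω | G i ω = 1} := hGmeas i (measurableSet_singleton 1)
      rw [hcompl, measure_compl hms (measure_ne_top P _), measure_univ, hG1 i hi1,
        ENNReal.ofReal_sub 1 (hα0 i), ENNReal.ofReal_one]
  have hAtomProb : ∀ S T : Finset ℕ,
      P (Atom S T) = (∏ i ∈ I, P (F i ⁻¹' {ind S i})) * ∏ i ∈ I, P (H i ⁻¹' {ind T i}) := by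
    intro S T
    have hset : Atom S T
        = ⋂ j ∈ I.disjSum I, Sum.elim F H j ⁻¹' {Sum.elim (ind S) (ind T) j} := by
      rw [hAtom]
      ext ω
      simp only [Set.mem_iInter, Set.mem_inter_iff, Set.mem_preimage, Set.mem_singleton_iff]
      constructor
      · rintro hw (i | i) hj
        · exact (hw i (by simpa using hj)).1
        · exact (hw i (by simpa using hj)).2
      · intro hw i hi
        exact ⟨hw (Sum.inl i) (by simpa using hi), hw (Sum.inr i) (by simpa using hi)⟩
    rw [hset, hindep.measure_inter_preimage_eq_mul (I.disjSum I)
      (fun j _ => measurableSet_singleton _), Finset.prod_disjSum]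
    simp only [Sum.elim_inl, Sum.elim_inr]
  have hval_of : ∀ (G : ℕ → Ω → ℕ), (∀ i ω, G i ω = 0 ∨ G i ω = 1) →
      ∀ ω : Ω, ∀ i ∈ I, G i ω = ind (I.filter (fun j => G j ω = 1)) i := by
    intro G hGv ω i hi
    rw [hind]; dsimp only
    rcases hGv i ω with h | h <;> simp [h, hi, Finset.mem_filter]
  have hsum_card : ∀ (G : ℕ → Ω → ℕ) (S : Finset ℕ) (ω : Ω),
      (∀ i ∈ I, G i ω = ind S i) → ∀ k ∈ I,
        (∑ i ∈ Finset.Icc k n, G i ω) = (S ∩ Finset.Icc k n).card := by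
    intro G S ω hval k hk
    rw [hI] at hk
    have hks : Finset.Icc k n ⊆ I := by
      rw [hI]
      intro x hx
      simp only [Finset.mem_Icc] at *
      omega
    rw [Finset.sum_congr rfl (fun i hi => hval i (hks hi))]
    rw [hind]
    dsimp only
    rw [← Finset.card_filter, Finset.filter_mem_eq_inter, Finset.inter_comm]
  set Good : Finset (Finset ℕ × Finset ℕ) :=
    (I.powerset ×ˢ I.powerset).filter
      (fun p => ∀ k ∈ I, (p.2 ∩ Finset.Icc k n).card ≤ (p.1 ∩ Finset.Icc k n).card) with hGood
  have hEvent : {ω | ∀ k ∈ I, (∑ i ∈ Finset.Icc k n, H i ω) ≤ ∑ i ∈ Finset.Icc k n, F i ω}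
      = ⋃ p ∈ Good, Atom p.1 p.2 := by
    ext ω
    simp only [Set.mem_setOf_eq, Set.mem_iUnion, exists_prop]
    constructor
    · intro hw
      refine ⟨(I.filter (fun j => F j ω = 1), I.filter (fun j => H j ω = 1)), ?_, ?_⟩
      · rw [hGood, Finset.mem_filter, Finset.mem_product]
        refine ⟨⟨Finset.mem_powerset.mpr (Finset.filter_subset _ _),
          Finset.mem_powerset.mpr (Finset.filter_subset _ _)⟩, ?_⟩
        intro k hk
        rw [← hsum_card F _ ω (hval_of F hFval ω) k hk,
          ← hsum_card H _ ω (hval_of H hHval ω) k hk]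
        exact hw k hk
      · rw [hAtomMem]
        intro i hi
        exact ⟨hval_of F hFval ω i hi, hval_of H hHval ω i hi⟩
    · rintro ⟨p, hp, hw⟩
      rw [hGood, Finset.mem_filter, Finset.mem_product] at hp
      obtain ⟨⟨hp1, hp2⟩, hgood⟩ := hp
      rw [hAtomMem] at hw
      intro k hk
      rw [hsum_card F p.1 ω (fun i hi => (hw i hi).1) k hk,
        hsum_card H p.2 ω (fun i hi => (hw i hi).2) k hk]
      exact hgood k hk
  have hdet : ∀ (G : ℕ → Ω → ℕ) (S : Finset ℕ) (ω : Ω), S ⊆ I →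
      (∀ i ∈ I, G i ω = ind S i) → S = I.filter (fun j => G j ω = 1) := by
    intro G S ω hS hval
    ext i
    simp only [Finset.mem_filter]
    constructor
    · intro hiS
      have hiI := hS hiS
      refine ⟨hiI, ?_⟩
      rw [hval i hiI, hind]
      simp [hiS]
    · rintro ⟨hiI, h1⟩
      rw [hval i hiI, hind] at h1
      dsimp only at h1
      by_contra hiS
      rw [if_neg hiS] at h1
      omega
  have hdisj : (Good : Set (Finset ℕ × Finset ℕ)).PairwiseDisjoint (fun p => Atom p.1 p.2) := by
    intro p hp q hq hpq
    simp only [Function.onFun]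
    rw [Set.disjoint_left]
    intro ω hωp hωq
    apply hpq
    simp only [Finset.mem_coe, hGood, Finset.mem_filter, Finset.mem_product,
      Finset.mem_powerset] at hp hq
    rw [hAtomMem] at hωp hωq
    have e1 : p.1 = q.1 := by
      rw [hdet F p.1 ω hp.1.1 (fun i hi => (hωp i hi).1),
        hdet F q.1 ω hq.1.1 (fun i hi => (hωq i hi).1)]
    have e2 : p.2 = q.2 := by
      rw [hdet H p.2 ω hp.1.2 (fun i hi => (hωp i hi).2),
        hdet H q.2 ω hq.1.2 (fun i hi => (hωq i hi).2)]
    exact Prod.ext e1 e2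
  rw [hEvent, measure_biUnion_finset hdisj (fun p _ => hAtomMeas p.1 p.2)]
  have hterm : ∀ p ∈ Good, P (Atom p.1 p.2)
      = ENNReal.ofReal ((∏ i ∈ I, wg p.1 i) * ∏ i ∈ I, wg p.2 i) := by
    intro p _
    rw [hAtomProb p.1 p.2,
      Finset.prod_congr rfl (fun i hi => hprob F hFmeas hFval hF1 p.1 i hi),
      Finset.prod_congr rfl (fun i hi => hprob H hHmeas hHval hH1 p.2 i hi),
      ← ENNReal.ofReal_prod_of_nonneg (fun i _ => hwg0 p.1 i),
      ← ENNReal.ofReal_prod_of_nonneg (fun i _ => hwg0 p.2 i),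
      ← ENNReal.ofReal_mul (Finset.prod_nonneg (fun i _ => hwg0 p.1 i))]
  rw [Finset.sum_congr rfl hterm,
    ENNReal.toReal_sum (fun p _ => ENNReal.ofReal_ne_top),
    Finset.sum_congr rfl (fun (p : Finset ℕ × Finset ℕ) (_ : p ∈ Good) =>
      ENNReal.toReal_ofReal (mul_nonneg (Finset.prod_nonneg fun i _ => hwg0 p.1 i)
        (Finset.prod_nonneg fun i _ => hwg0 p.2 i)))]
  rw [hGood, Finset.sum_filter, Finset.sum_product]
  dsimp only
  rw [regroup_sum I (fun S T =>
    if (∀ k ∈ I, (T ∩ Finset.Icc k n).card ≤ (S ∩ Finset.Icc k n).card)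
    then (∏ i ∈ I, wg S i) * ∏ i ∈ I, wg T i else 0)]
  refine Finset.sum_congr rfl ?_
  intro A hA
  have hAI : A ⊆ I := Finset.mem_powerset.mp hA
  have hstep : ∀ U ∈ A.powerset, ∀ B ∈ (I \ A).powerset,
      (if (∀ k ∈ I, (((A \ U) ∪ B) ∩ Finset.Icc k n).card ≤ ((U ∪ B) ∩ Finset.Icc k n).card)
        then (∏ i ∈ I, wg (U ∪ B) i) * ∏ i ∈ I, wg ((A \ U) ∪ B) i else 0)
      = (if walkCond n 0 A U then (∏ i ∈ A, (α i * (1 - α i))) else 0)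
          * ∏ i ∈ I \ A, (if i ∈ B then α i * α i else (1 - α i) * (1 - α i)) := by
    intro U hU B hB
    rw [Finset.mem_powerset] at hU hB
    have hAB : Disjoint A B := Finset.disjoint_sdiff.mono_right hB
    have gi := good_iff n A U B hU hAB
    rw [← hI] at gi
    have hw : (∏ i ∈ I, wg (U ∪ B) i) * ∏ i ∈ I, wg ((A \ U) ∪ B) i
        = (∏ i ∈ A, (α i * (1 - α i)))
            * ∏ i ∈ I \ A, (if i ∈ B then α i * α i else (1 - α i) * (1 - α i)) := by
      rw [← Finset.prod_mul_distrib, ← Finset.prod_sdiff hAI]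
      have hA' : ∀ i ∈ A, wg (U ∪ B) i * wg ((A \ U) ∪ B) i = α i * (1 - α i) := by
        intro i hi
        have hiB : i ∉ B := fun hh => (Finset.mem_sdiff.mp (hB hh)).2 hi
        rw [hwg]; dsimp only
        by_cases hiU : i ∈ U
        · have m1 : i ∈ U ∪ B := Finset.mem_union_left _ hiU
          have m2 : i ∉ (A \ U) ∪ B := by
            intro hh
            rcases Finset.mem_union.mp hh with hh | hh
            exacts [(Finset.mem_sdiff.mp hh).2 hiU, hiB hh]
          rw [if_pos m1, if_neg m2]
        · have m1 : i ∉ U ∪ B := by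
            intro hh
            rcases Finset.mem_union.mp hh with hh | hh
            exacts [hiU hh, hiB hh]
          have m2 : i ∈ (A \ U) ∪ B :=
            Finset.mem_union_left _ (Finset.mem_sdiff.mpr ⟨hi, hiU⟩)
          rw [if_neg m1, if_pos m2]
          ring
      have hIA' : ∀ i ∈ I \ A, wg (U ∪ B) i * wg ((A \ U) ∪ B) i
          = (if i ∈ B then α i * α i else (1 - α i) * (1 - α i)) := by
        intro i hi
        have hiA : i ∉ A := (Finset.mem_sdiff.mp hi).2
        have hiU : i ∉ U := fun hh => hiA (hU hh)
        have hiAU : i ∉ A \ U := fun hh => hiA (Finset.mem_sdiff.mp hh).1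
        rw [hwg]; dsimp only
        by_cases hiB : i ∈ B
        · rw [if_pos (Finset.mem_union_right _ hiB), if_pos (Finset.mem_union_right _ hiB),
            if_pos hiB]
        · have m1 : i ∉ U ∪ B := by
            intro hh
            rcases Finset.mem_union.mp hh with hh | hh
            exacts [hiU hh, hiB hh]
          have m2 : i ∉ (A \ U) ∪ B := by
            intro hh
            rcases Finset.mem_union.mp hh with hh | hh
            exacts [hiAU hh, hiB hh]
          rw [if_neg m1, if_neg m2, if_neg hiB]
      rw [Finset.prod_congr rfl hA', Finset.prod_congr rfl hIA', mul_comm]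
    simp only [gi, hw]
    rw [ite_mul, zero_mul]
  rw [Finset.sum_congr rfl (fun U hU => Finset.sum_congr rfl (fun B hB => hstep U hU B hB)),
    ← Finset.sum_mul_sum]
  have hAI' : A ⊆ Finset.Icc 1 n := by rw [← hI]; exact hAI
  have hcount : (∑ U ∈ A.powerset, if walkCond n 0 A U then (∏ i ∈ A, (α i * (1 - α i))) else 0)
      = (A.card.choose (A.card / 2) : ℝ) * ∏ i ∈ A, (α i * (1 - α i)) := by
    rw [← Finset.sum_filter, Finset.sum_const,
      count_walkCond n A.card A rfl hAI' 0, Gfun_closed, nsmul_eq_mul]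
  have hBsum : (∑ B ∈ (I \ A).powerset,
        ∏ i ∈ I \ A, (if i ∈ B then α i * α i else (1 - α i) * (1 - α i)))
      = ∏ i ∈ I \ A, (α i * α i + (1 - α i) * (1 - α i)) := by
    rw [Finset.prod_add]
    refine Finset.sum_congr rfl ?_
    intro B hB
    rw [Finset.mem_powerset] at hB
    rw [Finset.prod_ite]
    congr 1
    · rw [Finset.filter_mem_eq_inter, Finset.inter_eq_right.mpr hB]
    · rw [← Finset.sdiff_eq_filter]
  rw [hcount, hBsum]
  have h2A : (∏ i ∈ A, 2 * α i * (1 - α i)) = 2 ^ A.card * ∏ i ∈ A, (α i * (1 - α i)) := by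
    rw [Finset.prod_congr rfl (fun i (_ : i ∈ A) =>
      (by ring : 2 * α i * (1 - α i) = 2 * (α i * (1 - α i)))),
      Finset.prod_mul_distrib, Finset.prod_const]
  have hprodIA : (∏ i ∈ I \ A, (α i * α i + (1 - α i) * (1 - α i)))
      = ∏ i ∈ I \ A, (1 - 2 * α i * (1 - α i)) :=
    Finset.prod_congr rfl (fun i _ => by ring)
  rw [hprodIA, h2A]
  have h2 : (0:ℝ) < 2 ^ A.card := by positivity
  field_simp
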